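/- Let M, N be positive integers, let U₁, V₁ : ℤ → ℝ → Matrix (Fin M) (Fin M) ℝ and U₂, V₂ : ℤ → ℝ → Matrix (Fin N) (Fin N) ℝ be lattice matrix-valued functions, with U₁(n, ·) and U₂(n, ·) differentiable in t for each site n, satisfying the discrete zero curvature equations ∂_t U₁(n,t) = V₁(n+1,t) U₁(n,t) − U₁(n,t) V₁(n,t) and ∂_t U₂(n,t) = V₂(n+1,t) U₂(n,t) − U₂(n,t) V₂(n,t) for all n and t. Define U₃(n,t) = U₁(n,t) ⊗ U₂(n,t) and V₃(n,t) = V₁(n,t) ⊗ I_N + I_M ⊗ V₂(n,t). Then ∂_t U₃(n,t) = V₃(n+1,t) U₃(n,t) − U₃(n,t) V₃(n,t) for all n and t. -/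

import Mathlib

open Matrix Kronecker


private lemma sub_kron {m n p q : Type*} {A B : Matrix m n ℝ} {C : Matrix p q ℝ} :
    (A - B) ⊗ₖ C = A ⊗ₖ C - B ⊗ₖ C := by
  ext ⟨a, b⟩ ⟨c, d⟩
  simp [Matrix.kroneckerMap_apply, sub_mul]

private lemma kron_sub {m n p q : Type*} {A : Matrix m n ℝ} {C D : Matrix p q ℝ} :
    A ⊗ₖ (C - D) = A ⊗ₖ C - A ⊗ₖ D := by
  ext ⟨a, b⟩ ⟨c, d⟩
  simp [Matrix.kroneckerMap_apply, mul_sub]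

/-- **Theorem 3 (Discrete zero curvature representation via Kronecker product).**
If `∂ₜU₁(n) = V₁(n+1)U₁(n) - U₁(n)V₁(n)` and `∂ₜU₂(n) = V₂(n+1)U₂(n) - U₂(n)V₂(n)`,
then `U₃ = U₁ ⊗ U₂`, `V₃ = V₁ ⊗ I_N + I_M ⊗ V₂` satisfy
`∂ₜU₃(n) = V₃(n+1)U₃(n) - U₃(n)V₃(n)`.  Time derivatives are taken entrywise. -/
theorem kronecker_discrete_zero_curvature
    (M N : ℕ) (hM : 0 < M) (hN : 0 < N)
    (U₁ V₁ : ℤ → ℝ → Matrix (Fin M) (Fin M) ℝ)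
    (U₂ V₂ : ℤ → ℝ → Matrix (Fin N) (Fin N) ℝ)
    (h₁ : ∀ (n : ℤ) (t : ℝ) (i j : Fin M),
      HasDerivAt (fun s => U₁ n s i j)
        ((V₁ (n + 1) t * U₁ n t - U₁ n t * V₁ n t) i j) t)
    (h₂ : ∀ (n : ℤ) (t : ℝ) (i j : Fin N),
      HasDerivAt (fun s => U₂ n s i j)
        ((V₂ (n + 1) t * U₂ n t - U₂ n t * V₂ n t) i j) t)
    (U₃ V₃ : ℤ → ℝ → Matrix (Fin M × Fin N) (Fin M × Fin N) ℝ)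
    (hU₃ : ∀ (n : ℤ) (t : ℝ), U₃ n t = U₁ n t ⊗ₖ U₂ n t)
    (hV₃ : ∀ (n : ℤ) (t : ℝ), V₃ n t =
      V₁ n t ⊗ₖ (1 : Matrix (Fin N) (Fin N) ℝ) +
      (1 : Matrix (Fin M) (Fin M) ℝ) ⊗ₖ V₂ n t) :
    ∀ (n : ℤ) (t : ℝ) (i j : Fin M × Fin N),
      HasDerivAt (fun s => U₃ n s i j)
        ((V₃ (n + 1) t * U₃ n t - U₃ n t * V₃ n t) i j) t := by
  intro n t i j
  have key : V₃ (n + 1) t * U₃ n t - U₃ n t * V₃ n t =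
      (V₁ (n + 1) t * U₁ n t - U₁ n t * V₁ n t) ⊗ₖ U₂ n t +
      U₁ n t ⊗ₖ (V₂ (n + 1) t * U₂ n t - U₂ n t * V₂ n t) := by
    rw [hU₃, hV₃, hV₃]
    simp only [add_mul, mul_add, ← Matrix.mul_kronecker_mul, one_mul, mul_one,
      sub_mul, mul_sub, sub_kron, kron_sub]
    abel
  rw [key]
  have hd : HasDerivAt (fun s => U₁ n s i.1 j.1 * U₂ n s i.2 j.2) _ t :=
    (h₁ n t i.1 j.1).mul (h₂ n t i.2 j.2)
  simp only [hU₃, Matrix.add_apply, Matrix.kroneckerMap_apply]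
  convert hd using 1
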